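/- Let A = [[0,1],[-1,2]] and B = [[0,-1],[1,2]] in SL_2(ℤ). For any n ≥ 1 and nonzero integers r_1,…,r_n, s_1,…,s_n, the absolute value of the trace of A^{r_1} B^{s_1} ⋯ A^{r_n} B^{s_n} is at least 2|r_1 ⋯ r_n · s_1 ⋯ s_n|. -/

import Mathlib

open Matrix

noncomputable def NewmanA : Matrix.SpecialLinearGroup (Fin 2) ℤ :=
  ⟨!![0, 1; -1, 2], by simp [Matrix.det_fin_two_of]⟩

noncomputable def NewmanB : Matrix.SpecialLinearGroup (Fin 2) ℤ :=
  ⟨!![0, -1; 1, 2], by simp [Matrix.det_fin_two_of]⟩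

lemma coe_A_zpow (r : ℤ) :
    ((NewmanA ^ r : Matrix.SpecialLinearGroup (Fin 2) ℤ) : Matrix (Fin 2) (Fin 2) ℤ)
      = !![1 - r, r; -r, 1 + r] := by
  have hA : ((NewmanA : Matrix.SpecialLinearGroup (Fin 2) ℤ) : Matrix (Fin 2) (Fin 2) ℤ)
      = !![0, 1; -1, 2] := rfl
  have hAinv : ((NewmanA⁻¹ : Matrix.SpecialLinearGroup (Fin 2) ℤ) : Matrix (Fin 2) (Fin 2) ℤ)
      = !![2, -1; 1, 0] := by
    rw [Matrix.SpecialLinearGroup.coe_inv, hA, Matrix.adjugate_fin_two]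
    norm_num
  induction r using Int.induction_on with
  | zero => rw [zpow_zero, Matrix.SpecialLinearGroup.coe_one, Matrix.one_fin_two]; norm_num
  | succ n ih =>
      rw [_root_.zpow_add, zpow_one, Matrix.SpecialLinearGroup.coe_mul, ih, hA,
        Matrix.mul_fin_two]
      congr 1 <;> ring
  | pred n ih =>
      rw [_root_.zpow_sub, zpow_one, Matrix.SpecialLinearGroup.coe_mul, ih, hAinv,
        Matrix.mul_fin_two]
      congr 1 <;> ring

lemma coe_B_zpow (s : ℤ) :
    ((NewmanB ^ s : Matrix.SpecialLinearGroup (Fin 2) ℤ) : Matrix (Fin 2) (Fin 2) ℤ)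
      = !![1 - s, -s; s, 1 + s] := by
  have hB : ((NewmanB : Matrix.SpecialLinearGroup (Fin 2) ℤ) : Matrix (Fin 2) (Fin 2) ℤ)
      = !![0, -1; 1, 2] := rfl
  have hBinv : ((NewmanB⁻¹ : Matrix.SpecialLinearGroup (Fin 2) ℤ) : Matrix (Fin 2) (Fin 2) ℤ)
      = !![2, 1; -1, 0] := by
    rw [Matrix.SpecialLinearGroup.coe_inv, hB, Matrix.adjugate_fin_two]
    norm_num
  induction s using Int.induction_on with
  | zero => rw [zpow_zero, Matrix.SpecialLinearGroup.coe_one, Matrix.one_fin_two]; norm_num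
  | succ n ih =>
      rw [_root_.zpow_add, zpow_one, Matrix.SpecialLinearGroup.coe_mul, ih, hB,
        Matrix.mul_fin_two]
      congr 1 <;> ring
  | pred n ih =>
      rw [_root_.zpow_sub, zpow_one, Matrix.SpecialLinearGroup.coe_mul, ih, hBinv,
        Matrix.mul_fin_two]
      congr 1 <;> ring

/-- Entrywise positivity: all entries nonnegative, diagonal entries at least `c`. -/
def NewmanGood (M : Matrix (Fin 2) (Fin 2) ℤ) (c : ℤ) : Prop :=
  c ≤ M 0 0 ∧ 0 ≤ M 0 1 ∧ 0 ≤ M 1 0 ∧ c ≤ M 1 1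

lemma NewmanGood.mul {M N : Matrix (Fin 2) (Fin 2) ℤ} {c d : ℤ} (hc : 0 ≤ c) (hd : 0 ≤ d)
    (hM : NewmanGood M c) (hN : NewmanGood N d) : NewmanGood (M * N) (c * d) := by
  obtain ⟨h1, h2, h3, h4⟩ := hM
  obtain ⟨g1, g2, g3, g4⟩ := hN
  refine ⟨?_, ?_, ?_, ?_⟩ <;> simp only [Matrix.mul_apply, Fin.sum_univ_two]
  · nlinarith [mul_le_mul h1 g1 hd (hc.trans h1), mul_nonneg h2 g3]
  · exact add_nonneg (mul_nonneg (hc.trans h1) g2) (mul_nonneg h2 (hd.trans g4))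
  · exact add_nonneg (mul_nonneg h3 (hd.trans g1)) (mul_nonneg (hc.trans h4) g3)
  · nlinarith [mul_le_mul h4 g4 hd (hc.trans h4), mul_nonneg h3 g2]

lemma good_block (r s : ℤ) (hr : r ≠ 0) (hs : s ≠ 0) :
    ∃ ε : ℤ, (ε = 1 ∨ ε = -1) ∧
      NewmanGood (ε • ((NewmanA ^ r * NewmanB ^ s : Matrix.SpecialLinearGroup (Fin 2) ℤ) :
        Matrix (Fin 2) (Fin 2) ℤ)) |r * s| := by
  rw [Matrix.SpecialLinearGroup.coe_mul, coe_A_zpow, coe_B_zpow, Matrix.mul_fin_two]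
  rcases lt_or_gt_of_ne hr with h1 | h1 <;> rcases lt_or_gt_of_ne hs with h2 | h2
  · -- r < 0, s < 0 : rs > 0, ε = 1
    have hr1 : r ≤ -1 := by omega
    have hs1 : s ≤ -1 := by omega
    have habs : |r * s| = r * s := abs_of_pos (mul_pos_of_neg_of_neg h1 h2)
    refine ⟨1, Or.inl rfl, ?_⟩
    simp only [NewmanGood, habs]
    simp only [Matrix.smul_apply, smul_eq_mul, one_mul, neg_one_mul, Matrix.cons_val',
      Matrix.cons_val_zero, Matrix.cons_val_one, Matrix.head_cons, Matrix.empty_val',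
      Matrix.cons_val_fin_one, Matrix.head_fin_const, Matrix.of_apply]
    refine ⟨?_, ?_, ?_, ?_⟩ <;> nlinarith [mul_nonneg (by omega : (0:ℤ) ≤ -1 - r) (by omega : (0:ℤ) ≤ -1 - s)]
  · -- r < 0, s > 0 : rs < 0, ε = -1
    have hr1 : r ≤ -1 := by omega
    have hs1 : 1 ≤ s := by omega
    have habs : |r * s| = -(r * s) := abs_of_neg (mul_neg_of_neg_of_pos h1 h2)
    refine ⟨-1, Or.inr rfl, ?_⟩
    simp only [NewmanGood, habs]
    simp only [Matrix.smul_apply, smul_eq_mul, one_mul, neg_one_mul, Matrix.cons_val',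
      Matrix.cons_val_zero, Matrix.cons_val_one, Matrix.head_cons, Matrix.empty_val',
      Matrix.cons_val_fin_one, Matrix.head_fin_const, Matrix.of_apply]
    refine ⟨?_, ?_, ?_, ?_⟩ <;> nlinarith [mul_nonneg (by omega : (0:ℤ) ≤ -1 - r) (by omega : (0:ℤ) ≤ s - 1)]
  · -- r > 0, s < 0 : ε = -1
    have hr1 : 1 ≤ r := by omega
    have hs1 : s ≤ -1 := by omega
    have habs : |r * s| = -(r * s) := abs_of_neg (mul_neg_of_pos_of_neg h1 h2)
    refine ⟨-1, Or.inr rfl, ?_⟩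
    simp only [NewmanGood, habs]
    simp only [Matrix.smul_apply, smul_eq_mul, one_mul, neg_one_mul, Matrix.cons_val',
      Matrix.cons_val_zero, Matrix.cons_val_one, Matrix.head_cons, Matrix.empty_val',
      Matrix.cons_val_fin_one, Matrix.head_fin_const, Matrix.of_apply]
    refine ⟨?_, ?_, ?_, ?_⟩ <;> nlinarith [mul_nonneg (by omega : (0:ℤ) ≤ r - 1) (by omega : (0:ℤ) ≤ -1 - s)]
  · -- r > 0, s > 0 : ε = 1
    have hr1 : 1 ≤ r := by omega
    have hs1 : 1 ≤ s := by omega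
    have habs : |r * s| = r * s := abs_of_pos (mul_pos h1 h2)
    refine ⟨1, Or.inl rfl, ?_⟩
    simp only [NewmanGood, habs]
    simp only [Matrix.smul_apply, smul_eq_mul, one_mul, neg_one_mul, Matrix.cons_val',
      Matrix.cons_val_zero, Matrix.cons_val_one, Matrix.head_cons, Matrix.empty_val',
      Matrix.cons_val_fin_one, Matrix.head_fin_const, Matrix.of_apply]
    refine ⟨?_, ?_, ?_, ?_⟩ <;> nlinarith [mul_nonneg (by omega : (0:ℤ) ≤ r - 1) (by omega : (0:ℤ) ≤ s - 1)]

lemma good_list : ∀ l : List (Matrix (Fin 2) (Fin 2) ℤ × ℤ),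
    (∀ p ∈ l, 0 ≤ p.2 ∧ ∃ ε : ℤ, (ε = 1 ∨ ε = -1) ∧ NewmanGood (ε • p.1) p.2) →
    0 ≤ (l.map Prod.snd).prod ∧ ∃ ε : ℤ, (ε = 1 ∨ ε = -1) ∧
      NewmanGood (ε • (l.map Prod.fst).prod) (l.map Prod.snd).prod := by
  intro l
  induction l with
  | nil =>
      intro _
      refine ⟨zero_le_one, 1, Or.inl rfl, ?_⟩
      simp [NewmanGood, Matrix.one_apply]
  | cons a t ih =>
      intro h
      obtain ⟨ha2, ε, hε, hga⟩ := h a List.mem_cons_self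
      obtain ⟨ht2, δ, hδ, hgt⟩ := ih fun p hp => h p (List.mem_cons_of_mem a hp)
      refine ⟨mul_nonneg ha2 ht2, ε * δ, ?_, ?_⟩
      · rcases hε with h' | h' <;> rcases hδ with h'' | h'' <;> simp [h', h'']
      · simp only [List.map_cons, List.prod_cons]
        rw [← smul_smul, ← mul_smul_comm, ← smul_mul_assoc]
        exact hga.mul ha2 ht2 hgt
  
lemma coe_ofFn_prod : ∀ (m : ℕ) (f : Fin m → Matrix.SpecialLinearGroup (Fin 2) ℤ),
    (List.ofFn (fun i => ((f i : Matrix.SpecialLinearGroup (Fin 2) ℤ) :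
        Matrix (Fin 2) (Fin 2) ℤ))).prod
      = (((List.ofFn f).prod : Matrix.SpecialLinearGroup (Fin 2) ℤ) :
          Matrix (Fin 2) (Fin 2) ℤ) := by
  intro m
  induction m with
  | zero => intro f; simp
  | succ k ih =>
      intro f
      rw [List.ofFn_succ, List.ofFn_succ, List.prod_cons, List.prod_cons,
        Matrix.SpecialLinearGroup.coe_mul, ih]

/-- For any `n ≥ 1` and nonzero integers `r₁, …, rₙ, s₁, …, sₙ`, the trace of
`A^{r₁} B^{s₁} ⋯ A^{rₙ} B^{sₙ}` has absolute value at least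
`2 |r₁ ⋯ rₙ · s₁ ⋯ sₙ|`. -/
theorem newman_trace_bound (n : ℕ) (hn : 1 ≤ n) (r s : Fin n → ℤ)
    (hr : ∀ i, r i ≠ 0) (hs : ∀ i, s i ≠ 0) :
    2 * |(∏ i, r i) * ∏ i, s i| ≤
      |Matrix.trace (((List.ofFn fun i => NewmanA ^ r i * NewmanB ^ s i).prod :
        Matrix.SpecialLinearGroup (Fin 2) ℤ) : Matrix (Fin 2) (Fin 2) ℤ)| := by
  set l : List (Matrix (Fin 2) (Fin 2) ℤ × ℤ) :=
    List.ofFn (fun i => (((NewmanA ^ r i * NewmanB ^ s i :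
      Matrix.SpecialLinearGroup (Fin 2) ℤ) : Matrix (Fin 2) (Fin 2) ℤ), |r i * s i|)) with hl
  obtain ⟨hC, ε, hε, hg⟩ := good_list l (by
    intro p hp
    rw [hl, List.mem_ofFn] at hp
    obtain ⟨i, rfl⟩ := hp
    exact ⟨abs_nonneg _, good_block (r i) (s i) (hr i) (hs i)⟩)
  have hfst : (l.map Prod.fst).prod =
      ((List.ofFn fun i => NewmanA ^ r i * NewmanB ^ s i).prod :
        Matrix.SpecialLinearGroup (Fin 2) ℤ) := by
    have hmap : l.map Prod.fst = List.ofFn (fun i => (((NewmanA ^ r i * NewmanB ^ s i :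
        Matrix.SpecialLinearGroup (Fin 2) ℤ)) : Matrix (Fin 2) (Fin 2) ℤ)) := by
      rw [hl, List.map_ofFn]; rfl
    rw [hmap, coe_ofFn_prod n (fun i => NewmanA ^ r i * NewmanB ^ s i)]
  have hsnd : (l.map Prod.snd).prod = ∏ i, |r i * s i| := by
    rw [hl, List.map_ofFn, List.prod_ofFn]
    rfl
  rw [hfst] at hg
  rw [hsnd] at hg hC
  set P : Matrix (Fin 2) (Fin 2) ℤ :=
    (↑((List.ofFn fun i => NewmanA ^ r i * NewmanB ^ s i).prod :
      Matrix.SpecialLinearGroup (Fin 2) ℤ) : Matrix (Fin 2) (Fin 2) ℤ)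
  obtain ⟨g1, -, -, g4⟩ := hg
  simp only [Matrix.smul_apply, smul_eq_mul] at g1 g4
  have habs : |(∏ i, r i) * ∏ i, s i| = ∏ i, |r i * s i| := by
    simp [abs_mul, Finset.abs_prod, ← Finset.prod_mul_distrib]
  have htr : Matrix.trace P = P 0 0 + P 1 1 := Matrix.trace_fin_two P
  have h2 : 2 * ∏ i, |r i * s i| ≤ ε * Matrix.trace P := by
    rw [htr]; linarith
  have h3 : ε * Matrix.trace P ≤ |Matrix.trace P| := by
    rcases hε with h' | h' <;> simp [h'] <;> [exact le_abs_self _; exact neg_le_abs _]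
  rw [habs]
  exact le_trans h2 h3
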